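/- arXiv:1404.3555 — 2 statements merged into one kernel-verified Lean document; each statement's English description precedes it below -/
import Mathlib

section
/- Let (Ω, ℱ, (ℱ_s), ℙ) be a filtered probability space carrying ℝ^k-valued adapted processes (F_s) and (ℓ_s) and a real adapted process (y_s) satisfying Assumption 1 with functions 𝒜, ℬ_i (i = 1,…,p), 𝒞_j (j = 1,…,q). Fix ν₁ ∈ ℝ^k, ν₂ ∈ ℝ, z ∈ ℝ and integers t < T, and let M_{s,s+1} denote the stochastic discount factor. Define backward sequences by A*_T = 0, B*_{T,i} = 0, C*_{T,j} = 0 and, for s = T−1,…,t: A*_s = A*_{s+1} + 𝒜(z−ν₂, B*_{s+1,1}−ν₁, C*_{s+1,1}) − 𝒜(−ν₂, −ν₁, 0); B*_{s,i} = B*_{s+1,i+1} + ℬ_i(z−ν₂, B*_{s+1,1}−ν₁, C*_{s+1,1}) − ℬ_i(−ν₂, −ν₁, 0) for 1 ≤ i ≤ p−1 and B*_{s,p} = ℬ_p(z−ν₂, B*_{s+1,1}−ν₁, C*_{s+1,1}) − ℬ_p(−ν₂, −ν₁, 0); C*_{s,j} = C*_{s+1,j+1} + 𝒞_j(z−ν₂,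 B*_{s+1,1}−ν₁, C*_{s+1,1}) − 𝒞_j(−ν₂, −ν₁, 0) for 1 ≤ j ≤ q−1 and C*_{s,q} = 𝒞_q(z−ν₂, B*_{s+1,1}−ν₁, C*_{s+1,1}) − 𝒞_q(−ν₂, −ν₁, 0). Then 𝔼[M_{t,t+1} ⋯ M_{T−1,T} exp(z (y_{t+1} + ⋯ + y_T)) | ℱ_t] = exp(A*_t + ∑_{i=1}^p B*_{t,i}·F_{t+1−i} + ∑_{j=1}^q C*_{t,j}·ℓ_{t+1−j}) almost surely. -/
open MeasureTheory ProbabilityTheory Real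
open Filter

/-- Scalar product in `ℝ^k`. -/
def dotk {k : ℕ} (a b : Fin k → ℝ) : ℝ := ∑ i, a i * b i


lemma dotk_zero_left {k : ℕ} (v : Fin k → ℝ) : dotk 0 v = 0 := by simp [dotk]

lemma dotk_neg_left {k : ℕ} (a v : Fin k → ℝ) : dotk (-a) v = -dotk a v := by
  simp [dotk, Finset.sum_neg_distrib]

lemma dotk_sub_left {k : ℕ} (a b v : Fin k → ℝ) : dotk (a - b) v = dotk a v - dotk b v := by
  simp [dotk, sub_mul, Finset.sum_sub_distrib]

lemma dotk_add_left {k : ℕ} (a b v : Fin k → ℝ) : dotk (a + b) v = dotk a v + dotk b v := by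
  simp [dotk, add_mul, Finset.sum_add_distrib]

lemma dotk_smul_left {k : ℕ} (c : ℝ) (a v : Fin k → ℝ) : dotk (c • a) v = c * dotk a v := by
  simp [dotk, Finset.mul_sum, mul_assoc]

lemma dotk_dite_left {k : ℕ} (P : Prop) [Decidable P] (X : P → (Fin k → ℝ)) (v : Fin k → ℝ) :
    dotk (if h : P then X h else 0) v = if h : P then dotk (X h) v else 0 := by
  by_cases h : P <;> simp [h, dotk_zero_left]

lemma fin_sum_shift {p : ℕ} (hp : 0 < p) (v : Fin p → ℝ) :
    ∑ i, v i = v ⟨0, hp⟩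
      + ∑ i : Fin p, (if h : (i : ℕ) + 1 < p then v ⟨(i : ℕ) + 1, h⟩ else 0) := by
  obtain ⟨n, rfl⟩ : ∃ n, p = n + 1 := ⟨p - 1, by omega⟩
  rw [Fin.sum_univ_succ, Fin.sum_univ_castSucc]
  have h1 : ∀ i : Fin n,
      (if h : ((i.castSucc : Fin (n+1)) : ℕ) + 1 < n + 1 then v ⟨_, h⟩ else 0) = v i.succ := by
    intro i
    rw [dif_pos (by simp)]
    congr 1
  have h2 : (if h : ((Fin.last n : Fin (n+1)) : ℕ) + 1 < n + 1 then v ⟨_, h⟩ else 0) = 0 := by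
    rw [dif_neg (by simp)]
  rw [Finset.sum_congr rfl fun i _ => h1 i, h2, add_zero]
  rfl


/-- If `f ≥ 0` is `m`-measurable, `g ≥ 0` is integrable and `f · 𝔼[g|m]` is integrable,
then `f · g` is integrable. -/
lemma integrable_mul_of_integrable_mul_condexp {Ω : Type*} {m m0 : MeasurableSpace Ω}
    (hm : m ≤ m0) {μ : Measure Ω} [IsFiniteMeasure μ] {f g h : Ω → ℝ}
    (hf : StronglyMeasurable[m] f) (hf0 : ∀ ω, 0 ≤ f ω)
    (hg : Integrable g μ) (hg0 : 0 ≤ᵐ[μ] g)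
    (hgh : μ[g|m] =ᵐ[μ] h)
    (hfh : Integrable (fun ω => f ω * h ω) μ) :
    Integrable (fun ω => f ω * g ω) μ := by
  have hfm0 : StronglyMeasurable f := hf.mono hm
  have hh0 : 0 ≤ᵐ[μ] h := by
    filter_upwards [condExp_nonneg (m := m) hg0, hgh] with ω h1 h2
    rw [← h2]; exact h1
  have hhInt : Integrable h μ := integrable_condExp.congr hgh
  -- truncations
  set fn : ℕ → Ω → ℝ := fun n ω => min (f ω) n with hfn
  have hfn_meas : ∀ n, StronglyMeasurable[m] (fn n) := fun n => (Measurable.min hf.measurable measurable_const).stronglyMeasurable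
  have hfn_nonneg : ∀ n ω, 0 ≤ fn n ω := fun n ω => le_min (hf0 ω) (Nat.cast_nonneg n)
  have hfn_le : ∀ n ω, fn n ω ≤ f ω := fun n ω => min_le_left _ _
  have hfn_bdd : ∀ n, ∃ C : ℝ, ∀ ω, ‖fn n ω‖ ≤ C := by
    intro n
    exact ⟨n, fun ω => by
      rw [Real.norm_eq_abs, abs_of_nonneg (hfn_nonneg n ω)]; exact min_le_right _ _⟩
  have hIntg : ∀ n, Integrable (fun ω => fn n ω * g ω) μ :=
    fun n => hg.bdd_mul ((hfn_meas n).mono hm).aestronglyMeasurable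
      (Filter.Eventually.of_forall (hfn_bdd n).choose_spec)
  have hInth : ∀ n, Integrable (fun ω => fn n ω * h ω) μ :=
    fun n => hhInt.bdd_mul ((hfn_meas n).mono hm).aestronglyMeasurable
      (Filter.Eventually.of_forall (hfn_bdd n).choose_spec)
  -- integral identity for truncations
  have hIeq : ∀ n, ∫ ω, fn n ω * g ω ∂μ = ∫ ω, fn n ω * h ω ∂μ := by
    intro n
    have h1 : μ[fun ω => fn n ω * g ω|m] =ᵐ[μ] fun ω => fn n ω * (μ[g|m]) ω :=
      condExp_mul_of_stronglyMeasurable_left (hfn_meas n) (hIntg n) hg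
    have h2 : (fun ω => fn n ω * (μ[g|m]) ω) =ᵐ[μ] fun ω => fn n ω * h ω := by
      filter_upwards [hgh] with ω hω; rw [hω]
    calc ∫ ω, fn n ω * g ω ∂μ = ∫ ω, (μ[fun ω => fn n ω * g ω|m]) ω ∂μ :=
          (integral_condExp hm).symm
      _ = ∫ ω, fn n ω * h ω ∂μ := integral_congr_ae (h1.trans h2)
  -- lintegral bound
  have hbnd : ∀ n, ∫⁻ ω, ENNReal.ofReal (fn n ω * g ω) ∂μ
      ≤ ∫⁻ ω, ENNReal.ofReal (f ω * h ω) ∂μ := by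
    intro n
    have e1 : ENNReal.ofReal (∫ ω, fn n ω * g ω ∂μ)
        = ∫⁻ ω, ENNReal.ofReal (fn n ω * g ω) ∂μ :=
      ofReal_integral_eq_lintegral_ofReal (hIntg n)
        (by filter_upwards [hg0] with ω hω; exact mul_nonneg (hfn_nonneg n ω) hω)
    have e2 : ENNReal.ofReal (∫ ω, fn n ω * h ω ∂μ)
        = ∫⁻ ω, ENNReal.ofReal (fn n ω * h ω) ∂μ :=
      ofReal_integral_eq_lintegral_ofReal (hInth n)
        (by filter_upwards [hh0] with ω hω; exact mul_nonneg (hfn_nonneg n ω) hω)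
    have e3 : ∫⁻ ω, ENNReal.ofReal (fn n ω * h ω) ∂μ
        ≤ ∫⁻ ω, ENNReal.ofReal (f ω * h ω) ∂μ := by
      refine lintegral_mono_ae ?_
      filter_upwards [hh0] with ω hω
      exact ENNReal.ofReal_le_ofReal (mul_le_mul_of_nonneg_right (hfn_le n ω) hω)
    rw [← e1, hIeq n, e2]; exact e3
  -- monotone convergence
  have hgm : AEMeasurable g μ := hg.aemeasurable
  have htend : Tendsto (fun n => ∫⁻ ω, ENNReal.ofReal (fn n ω * g ω) ∂μ) atTop
      (nhds (∫⁻ ω, ENNReal.ofReal (f ω * g ω) ∂μ)) := by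
    refine lintegral_tendsto_of_tendsto_of_monotone ?_ ?_ ?_
    · intro n
      exact ENNReal.measurable_ofReal.comp_aemeasurable
        (((hfm0.measurable.min measurable_const).aemeasurable).mul hgm)
    · filter_upwards [hg0] with ω hω
      intro a b hab
      exact ENNReal.ofReal_le_ofReal (mul_le_mul_of_nonneg_right
        (min_le_min le_rfl (Nat.cast_le.2 hab)) hω)
    · refine Eventually.of_forall fun ω => ?_
      have : ∀ᶠ n in atTop, fn n ω * g ω = f ω * g ω := by
        filter_upwards [eventually_ge_atTop ⌈f ω⌉₊] with n hn
        have : f ω ≤ (n : ℝ) := le_trans (Nat.le_ceil _) (Nat.cast_le.2 hn)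
        rw [hfn]; simp [min_eq_left this]
      exact Tendsto.congr' (by filter_upwards [this] with n hn; rw [hn]) tendsto_const_nhds
  have hfin : ∫⁻ ω, ENNReal.ofReal (f ω * g ω) ∂μ < ⊤ := by
    refine lt_of_le_of_lt (le_of_tendsto' htend hbnd) ?_
    have : ∫⁻ ω, ENNReal.ofReal (f ω * h ω) ∂μ = ∫⁻ ω, ‖f ω * h ω‖ₑ ∂μ := by
      refine lintegral_congr_ae ?_
      filter_upwards [hh0] with ω hω
      rw [Real.enorm_eq_ofReal (mul_nonneg (hf0 ω) hω)]
    rw [this]; exact hfh.hasFiniteIntegral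
  refine ⟨hfm0.aestronglyMeasurable.mul hg.aestronglyMeasurable, ?_⟩
  rw [hasFiniteIntegral_iff_norm]
  calc ∫⁻ ω, ENNReal.ofReal ‖f ω * g ω‖ ∂μ
      = ∫⁻ ω, ENNReal.ofReal (f ω * g ω) ∂μ := by
        refine lintegral_congr_ae ?_
        filter_upwards [hg0] with ω hω
        rw [Real.norm_eq_abs, abs_of_nonneg (mul_nonneg (hf0 ω) hω)]
    _ < ⊤ := hfin


/-- A nonnegative function all of whose powers are integrable. -/
def GoodM {Ω : Type*} {m0 : MeasurableSpace Ω} (μ : Measure Ω) (f : Ω → ℝ) : Prop :=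
  AEStronglyMeasurable f μ ∧ (∀ ω, 0 ≤ f ω) ∧ ∀ n : ℕ, Integrable (fun ω => f ω ^ n) μ

lemma GoodM.integrable {Ω : Type*} {m0 : MeasurableSpace Ω} {μ : Measure Ω} {f : Ω → ℝ}
    (hf : GoodM μ f) : Integrable f μ := by
  simpa using hf.2.2 1

lemma GoodM.congr {Ω : Type*} {m0 : MeasurableSpace Ω} {μ : Measure Ω} {f g : Ω → ℝ}
    (hf : GoodM μ f) (hfg : ∀ ω, f ω = g ω) : GoodM μ g := by
  have : f = g := funext hfg
  exact this ▸ hf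

lemma GoodM.mul {Ω : Type*} {m0 : MeasurableSpace Ω} {μ : Measure Ω} {f g : Ω → ℝ}
    (hf : GoodM μ f) (hg : GoodM μ g) : GoodM μ (fun ω => f ω * g ω) := by
  refine ⟨hf.1.mul hg.1, fun ω => mul_nonneg (hf.2.1 ω) (hg.2.1 ω), fun n => ?_⟩
  have hb : Integrable (fun ω => f ω ^ (2 * n) / 2 + g ω ^ (2 * n) / 2) μ :=
    ((hf.2.2 (2 * n)).div_const 2).add ((hg.2.2 (2 * n)).div_const 2)
  refine hb.mono' ((hf.1.mul hg.1).pow n) ?_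
  refine Eventually.of_forall fun ω => ?_
  have h1 : 0 ≤ f ω ^ n * g ω ^ n := mul_nonneg (pow_nonneg (hf.2.1 ω) n) (pow_nonneg (hg.2.1 ω) n)
  have h2 : f ω ^ n * g ω ^ n ≤ f ω ^ (2 * n) / 2 + g ω ^ (2 * n) / 2 := by
    have := two_mul_le_add_sq (f ω ^ n) (g ω ^ n)
    have e1 : f ω ^ (2 * n) = (f ω ^ n) ^ 2 := by rw [← pow_mul, mul_comm]
    have e2 : g ω ^ (2 * n) = (g ω ^ n) ^ 2 := by rw [← pow_mul, mul_comm]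
    rw [e1, e2]; linarith
  rw [Real.norm_eq_abs, mul_pow, abs_of_nonneg h1]
  exact h2

lemma GoodM.const {Ω : Type*} {m0 : MeasurableSpace Ω} {μ : Measure Ω} [IsFiniteMeasure μ]
    {c : ℝ} (hc : 0 ≤ c) : GoodM μ (fun _ => c) :=
  ⟨aestronglyMeasurable_const, fun _ => hc, fun n => integrable_const _⟩

lemma GoodM.finsetProd {Ω : Type*} {m0 : MeasurableSpace Ω} {μ : Measure Ω} [IsFiniteMeasure μ]
    {ι : Type*} (s : Finset ι) (f : ι → Ω → ℝ) (h : ∀ i ∈ s, GoodM μ (f i)) :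
    GoodM μ (fun ω => ∏ i ∈ s, f i ω) := by
  classical
  induction s using Finset.induction_on with
  | empty => exact (GoodM.const zero_le_one).congr (by simp)
  | @insert a s hnotmem ih =>
    have := (h a (Finset.mem_insert_self a s)).mul
      (ih fun i hi => h i (Finset.mem_insert_of_mem hi))
    exact this.congr fun ω => by rw [Finset.prod_insert hnotmem]


/-- Under Assumption 1 and the exponential-affine stochastic discount factor
`M_{s,s+1} = exp(−ν₁·F_{s+1} − ν₂ y_{s+1}) / 𝔼[exp(−ν₁·F_{s+1} − ν₂ y_{s+1}) | ℱ_s]`, the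
risk-neutral moment generating function of the aggregated log-return is exponentially affine
in the past factors and leverages, with starred backward-recursion coefficients. -/
theorem mgf_risk_neutral_recursion
    {Ω : Type*} {m0 : MeasurableSpace Ω} {μ : Measure Ω} [IsProbabilityMeasure μ]
    (ℱ : Filtration ℤ m0) {k p q : ℕ} (hp : 0 < p) (hq : 0 < q)
    (F L : ℤ → Ω → (Fin k → ℝ)) (y : ℤ → Ω → ℝ)
    -- the processes are adapted
    (hFad : ∀ s : ℤ, StronglyMeasurable[ℱ s] (F s))
    (hLad : ∀ s : ℤ, StronglyMeasurable[ℱ s] (L s))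
    (hyad : ∀ s : ℤ, StronglyMeasurable[ℱ s] (y s))
    -- Assumption 1
    (𝒜 : ℝ → (Fin k → ℝ) → (Fin k → ℝ) → ℝ)
    (ℬ : ℝ → (Fin k → ℝ) → (Fin k → ℝ) → Fin p → (Fin k → ℝ))
    (𝒞 : ℝ → (Fin k → ℝ) → (Fin k → ℝ) → Fin q → (Fin k → ℝ))
    (hint : ∀ (s : ℤ) (z : ℝ) (b c : Fin k → ℝ),
      Integrable (fun ω =>
        Real.exp (z * y (s + 1) ω + dotk b (F (s + 1) ω) + dotk c (L (s + 1) ω))) μ)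
    (haff : ∀ (s : ℤ) (z : ℝ) (b c : Fin k → ℝ),
      (μ[fun ω =>
          Real.exp (z * y (s + 1) ω + dotk b (F (s + 1) ω) + dotk c (L (s + 1) ω)) | ℱ s])
        =ᵐ[μ] fun ω => Real.exp (𝒜 z b c
          + ∑ i : Fin p, dotk (ℬ z b c i) (F (s - (i : ℕ)) ω)
          + ∑ j : Fin q, dotk (𝒞 z b c j) (L (s - (j : ℕ)) ω)))
    (h𝒜0 : 𝒜 0 0 0 = 0) (hℬ0 : ∀ i, ℬ 0 0 0 i = 0) (h𝒞0 : ∀ j, 𝒞 0 0 0 j = 0)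
    -- the stochastic discount factor
    (ν₁ : Fin k → ℝ) (ν₂ : ℝ)
    (M : ℤ → Ω → ℝ)
    (hM : ∀ s : ℤ, M s =ᵐ[μ] fun ω =>
      Real.exp (-dotk ν₁ (F (s + 1) ω) - ν₂ * y (s + 1) ω) /
        (μ[fun ω' => Real.exp (-dotk ν₁ (F (s + 1) ω') - ν₂ * y (s + 1) ω') | ℱ s]) ω)
    -- the starred backward sequences
    (z : ℝ) (t T : ℤ) (htT : t < T)
    (A : ℤ → ℝ) (B : ℤ → Fin p → (Fin k → ℝ)) (C : ℤ → Fin q → (Fin k → ℝ))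
    (hAT : A T = 0) (hBT : ∀ i, B T i = 0) (hCT : ∀ j, C T j = 0)
    (hArec : ∀ s : ℤ, t ≤ s → s < T →
      A s = A (s + 1) + 𝒜 (z - ν₂) (B (s + 1) ⟨0, hp⟩ - ν₁) (C (s + 1) ⟨0, hq⟩)
        - 𝒜 (-ν₂) (-ν₁) 0)
    (hBrec : ∀ (s : ℤ), t ≤ s → s < T → ∀ i : Fin p,
      B s i = (if h : (i : ℕ) + 1 < p then B (s + 1) ⟨(i : ℕ) + 1, h⟩ else 0)
        + ℬ (z - ν₂) (B (s + 1) ⟨0, hp⟩ - ν₁) (C (s + 1) ⟨0, hq⟩) i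
        - ℬ (-ν₂) (-ν₁) 0 i)
    (hCrec : ∀ (s : ℤ), t ≤ s → s < T → ∀ j : Fin q,
      C s j = (if h : (j : ℕ) + 1 < q then C (s + 1) ⟨(j : ℕ) + 1, h⟩ else 0)
        + 𝒞 (z - ν₂) (B (s + 1) ⟨0, hp⟩ - ν₁) (C (s + 1) ⟨0, hq⟩) j
        - 𝒞 (-ν₂) (-ν₁) 0 j) :
    (μ[fun ω => (∏ s ∈ Finset.Ico t T, M s ω) *
        Real.exp (z * ∑ u ∈ Finset.Icc (t + 1) T, y u ω) | ℱ t])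
      =ᵐ[μ] fun ω => Real.exp (A t
        + ∑ i : Fin p, dotk (B t i) (F (t - (i : ℕ)) ω)
        + ∑ j : Fin q, dotk (C t j) (L (t - (j : ℕ)) ω)) := by
    classical
  -- measurability helpers
  have hym : ∀ (u v : ℤ), u ≤ v → Measurable[ℱ v] (y u) := fun u v huv =>
    ((hyad u).measurable).mono (ℱ.mono huv) le_rfl
  have hFm : ∀ (u v : ℤ), u ≤ v → ∀ c : Fin k → ℝ,
      Measurable[ℱ v] fun ω => dotk c (F u ω) := by
    intro u v huv c
    simp only [dotk]
    exact Finset.measurable_sum _ fun i _ =>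
      ((measurable_pi_apply i).comp (((hFad u).measurable).mono (ℱ.mono huv) le_rfl)).const_mul
        (c i)
  have hLm : ∀ (u v : ℤ), u ≤ v → ∀ c : Fin k → ℝ,
      Measurable[ℱ v] fun ω => dotk c (L u ω) := by
    intro u v huv c
    simp only [dotk]
    exact Finset.measurable_sum _ fun i _ =>
      ((measurable_pi_apply i).comp (((hLad u).measurable).mono (ℱ.mono huv) le_rfl)).const_mul
        (c i)
  -- good atoms
  have good_atom : ∀ (u : ℤ) (zc : ℝ) (b c : Fin k → ℝ),
      GoodM μ fun ω => Real.exp (zc * y u ω + dotk b (F u ω) + dotk c (L u ω)) := by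
    intro u zc b c
    have hmeas : Measurable fun ω => zc * y u ω + dotk b (F u ω) + dotk c (L u ω) := by
      refine Measurable.add (Measurable.add ?_ ?_) ?_
      · exact ((hym u u le_rfl).mono (ℱ.le u) le_rfl).const_mul zc
      · exact (hFm u u le_rfl b).mono (ℱ.le u) le_rfl
      · exact (hLm u u le_rfl c).mono (ℱ.le u) le_rfl
    refine ⟨(Real.measurable_exp.comp hmeas).aestronglyMeasurable,
      fun ω => (Real.exp_pos _).le, fun n => ?_⟩
    have h := hint (u - 1) ((n : ℝ) * zc) ((n : ℝ) • b) ((n : ℝ) • c)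
    rw [sub_add_cancel] at h
    refine h.congr (Filter.Eventually.of_forall fun ω => ?_)
    show Real.exp ((n : ℝ) * zc * y u ω + dotk ((n : ℝ) • b) (F u ω) + dotk ((n : ℝ) • c) (L u ω))
      = Real.exp (zc * y u ω + dotk b (F u ω) + dotk c (L u ω)) ^ n
    rw [← Real.exp_nat_mul, dotk_smul_left, dotk_smul_left]
    congr 1
    ring
  -- named local processes
  set aff0 : ℤ → Ω → ℝ := fun s ω =>
    𝒜 (-ν₂) (-ν₁) 0 + ∑ i : Fin p, dotk (ℬ (-ν₂) (-ν₁) 0 i) (F (s - (i : ℕ)) ω)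
      + ∑ j : Fin q, dotk (𝒞 (-ν₂) (-ν₁) 0 j) (L (s - (j : ℕ)) ω) with haff0
  set Mh : ℤ → Ω → ℝ := fun s ω =>
    Real.exp (-dotk ν₁ (F (s + 1) ω) - ν₂ * y (s + 1) ω - aff0 s ω) with hMh
  set G : ℤ → Ω → ℝ := fun s ω =>
    (∏ u ∈ Finset.Ico s T, Mh u ω) * Real.exp (z * ∑ u ∈ Finset.Icc (s + 1) T, y u ω) with hG
  set Φ : ℤ → Ω → ℝ := fun s ω =>
    A s + ∑ i : Fin p, dotk (B s i) (F (s - (i : ℕ)) ω)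
      + ∑ j : Fin q, dotk (C s j) (L (s - (j : ℕ)) ω) with hΦ
  have hGnn : ∀ (r : ℤ) (ω : Ω), 0 ≤ G r ω := by
    intro r ω
    simp only [hG, hMh]
    exact mul_nonneg (Finset.prod_nonneg fun u _ => (Real.exp_pos _).le) (Real.exp_pos _).le
  have goodPhi : ∀ s : ℤ, GoodM μ fun ω => Real.exp (Φ s ω) := by
    intro s
    have h1 : GoodM μ fun ω => ∏ i : Fin p, Real.exp (dotk (B s i) (F (s - (i : ℕ)) ω)) := by
      refine GoodM.finsetProd _ _ fun i _ => ?_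
      exact (good_atom (s - (i : ℕ)) 0 (B s i) 0).congr fun ω =>
        congrArg Real.exp (by rw [dotk_zero_left]; ring)
    have h2 : GoodM μ fun ω => ∏ j : Fin q, Real.exp (dotk (C s j) (L (s - (j : ℕ)) ω)) := by
      refine GoodM.finsetProd _ _ fun j _ => ?_
      exact (good_atom (s - (j : ℕ)) 0 0 (C s j)).congr fun ω =>
        congrArg Real.exp (by rw [dotk_zero_left]; ring)
    refine ((GoodM.const (Real.exp_pos (A s)).le).mul (h1.mul h2)).congr fun ω => ?_
    simp only [hΦ, Real.exp_add, Real.exp_sum]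
    ring
  -- the pull-out tool
  have pull : ∀ (s : ℤ) (f g h : Ω → ℝ), StronglyMeasurable[ℱ s] f → (∀ ω, 0 ≤ f ω) →
      Integrable g μ → (∀ ω, 0 ≤ g ω) → μ[g|ℱ s] =ᵐ[μ] h →
      Integrable (fun ω => f ω * h ω) μ →
      Integrable (fun ω => f ω * g ω) μ ∧
        (μ[fun ω => f ω * g ω|ℱ s] =ᵐ[μ] fun ω => f ω * h ω) := by
    intro s f g h hfm hf0 hgi hg0 hgh hfh
    have hInt := integrable_mul_of_integrable_mul_condexp (ℱ.le s) hfm hf0 hgi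
      (Filter.Eventually.of_forall hg0) hgh hfh
    refine ⟨hInt, ?_⟩
    have heq : (fun ω => f ω * g ω) = f * g := rfl
    rw [heq]
    have h1 : μ[f * g|ℱ s] =ᵐ[μ] f * μ[g|ℱ s] :=
      condExp_mul_of_stronglyMeasurable_left hfm (by exact hInt) hgi
    refine h1.trans ?_
    filter_upwards [hgh] with ω hω
    simp only [Pi.mul_apply]
    rw [hω]
  -- the backward induction
  have key : ∀ n : ℕ, ∀ s : ℤ, t ≤ s → s + (n : ℤ) = T →
      Integrable (G s) μ ∧ (μ[G s|ℱ s] =ᵐ[μ] fun ω => Real.exp (Φ s ω)) := by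
    intro n
    induction n with
    | zero =>
      intro s hts hsT
      have hsT' : s = T := by omega
      subst hsT'
      have hG1 : G s = fun _ => (1 : ℝ) := by
        funext ω
        simp only [hG]
        rw [Finset.Ico_self, Finset.prod_empty, Finset.Icc_eq_empty (by omega),
          Finset.sum_empty, mul_zero, Real.exp_zero, one_mul]
      have hΦ0 : ∀ ω : Ω, Φ s ω = 0 := by
        intro ω
        simp only [hΦ]
        rw [hAT]
        simp [hBT, hCT, dotk_zero_left]
      constructor
      · rw [hG1]; exact integrable_const 1
      · rw [hG1, condExp_const (ℱ.le s)]
        refine Filter.Eventually.of_forall fun ω => ?_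
        show (1 : ℝ) = Real.exp (Φ s ω)
        rw [hΦ0 ω, Real.exp_zero]
    | succ n ih =>
      intro s hts hsT
      have hslt : s < T := by omega
      have hts1 : t ≤ s + 1 := by omega
      have hsT1 : (s + 1) + (n : ℤ) = T := by push_cast at hsT ⊢; omega
      obtain ⟨ihInt, ihCE⟩ := ih (s + 1) hts1 hsT1
      set fs : Ω → ℝ := fun ω => Mh s ω * Real.exp (z * y (s + 1) ω) with hfs
      set g' : Ω → ℝ := fun ω => Real.exp ((z - ν₂) * y (s + 1) ω
        + dotk (B (s + 1) ⟨0, hp⟩ - ν₁) (F (s + 1) ω)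
        + dotk (C (s + 1) ⟨0, hq⟩) (L (s + 1) ω)) with hg'
      set ψ : Ω → ℝ := fun ω => A (s + 1) - aff0 s ω
          + ∑ i : Fin p, (if h : (i : ℕ) + 1 < p then
              dotk (B (s + 1) ⟨(i : ℕ) + 1, h⟩) (F (s - (i : ℕ)) ω) else 0)
          + ∑ j : Fin q, (if h : (j : ℕ) + 1 < q then
              dotk (C (s + 1) ⟨(j : ℕ) + 1, h⟩) (L (s - (j : ℕ)) ω) else 0) with hψ
      set aff' : Ω → ℝ := fun ω => 𝒜 (z - ν₂) (B (s + 1) ⟨0, hp⟩ - ν₁) (C (s + 1) ⟨0, hq⟩)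
          + ∑ i : Fin p, dotk (ℬ (z - ν₂) (B (s + 1) ⟨0, hp⟩ - ν₁) (C (s + 1) ⟨0, hq⟩) i)
              (F (s - (i : ℕ)) ω)
          + ∑ j : Fin q, dotk (𝒞 (z - ν₂) (B (s + 1) ⟨0, hp⟩ - ν₁) (C (s + 1) ⟨0, hq⟩) j)
              (L (s - (j : ℕ)) ω) with haff'
      -- Φ (s+1) decomposition
      have hΦsplit : ∀ ω : Ω, Φ (s + 1) ω = A (s + 1)
          + dotk (B (s + 1) ⟨0, hp⟩) (F (s + 1) ω) + dotk (C (s + 1) ⟨0, hq⟩) (L (s + 1) ω)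
          + (∑ i : Fin p, (if h : (i : ℕ) + 1 < p then
              dotk (B (s + 1) ⟨(i : ℕ) + 1, h⟩) (F (s - (i : ℕ)) ω) else 0))
          + (∑ j : Fin q, (if h : (j : ℕ) + 1 < q then
              dotk (C (s + 1) ⟨(j : ℕ) + 1, h⟩) (L (s - (j : ℕ)) ω) else 0)) := by
        intro ω
        simp only [hΦ]
        rw [fin_sum_shift hp (fun i : Fin p => dotk (B (s + 1) i) (F (s + 1 - (i : ℕ)) ω)),
          fin_sum_shift hq (fun j : Fin q => dotk (C (s + 1) j) (L (s + 1 - (j : ℕ)) ω))]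
        have e1 : ∀ i : Fin p,
            (if h : (i : ℕ) + 1 < p then
              dotk (B (s + 1) ⟨(i : ℕ) + 1, h⟩) (F (s + 1 - (((⟨(i : ℕ) + 1, h⟩ : Fin p)) : ℕ)) ω)
            else 0)
            = (if h : (i : ℕ) + 1 < p then
              dotk (B (s + 1) ⟨(i : ℕ) + 1, h⟩) (F (s - (i : ℕ)) ω) else 0) := by
          intro i
          by_cases h : (i : ℕ) + 1 < p
          · rw [dif_pos h, dif_pos h]
            congr 2
            push_cast
            ring
          · rw [dif_neg h, dif_neg h]
        have e2 : ∀ j : Fin q,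
            (if h : (j : ℕ) + 1 < q then
              dotk (C (s + 1) ⟨(j : ℕ) + 1, h⟩) (L (s + 1 - (((⟨(j : ℕ) + 1, h⟩ : Fin q)) : ℕ)) ω)
            else 0)
            = (if h : (j : ℕ) + 1 < q then
              dotk (C (s + 1) ⟨(j : ℕ) + 1, h⟩) (L (s - (j : ℕ)) ω) else 0) := by
          intro j
          by_cases h : (j : ℕ) + 1 < q
          · rw [dif_pos h, dif_pos h]
            congr 2
            push_cast
            ring
          · rw [dif_neg h, dif_neg h]
        rw [Finset.sum_congr rfl fun i _ => e1 i, Finset.sum_congr rfl fun j _ => e2 j]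
        have e3 : (s + 1 - (((⟨0, hp⟩ : Fin p) : Fin p) : ℕ) : ℤ) = s + 1 := by
          norm_num
        have e4 : (s + 1 - (((⟨0, hq⟩ : Fin q) : Fin q) : ℕ) : ℤ) = s + 1 := by
          norm_num
        rw [e3]
        abel
      -- pointwise identity (I1)
      have hI1 : ∀ ω : Ω, G s ω = fs ω * G (s + 1) ω := by
        intro ω
        have hico : Finset.Ico s T = insert s (Finset.Ico (s + 1) T) := by
          have h1 : Finset.Ico (s + 1) T = Finset.Ioo s T := by
            ext u
            simp [Finset.mem_Ico, Finset.mem_Ioo, Int.add_one_le_iff]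
          rw [h1, Finset.Ioo_insert_left hslt]
        have hicc : Finset.Icc (s + 1) T = insert (s + 1) (Finset.Icc (s + 1 + 1) T) := by
          have h1 : Finset.Icc (s + 1 + 1) T = Finset.Ioc (s + 1) T := by
            ext u
            simp [Finset.mem_Icc, Finset.mem_Ioc, Int.add_one_le_iff]
          rw [h1, Finset.Ioc_insert_left (by omega : s + 1 ≤ T)]
        simp only [hG, hfs]
        rw [hico, Finset.prod_insert (by simp), hicc,
          Finset.sum_insert (by simp), mul_add, Real.exp_add]
        ring
      -- pointwise identity (I2)
      have hI2 : ∀ ω : Ω, fs ω * Real.exp (Φ (s + 1) ω) = Real.exp (ψ ω) * g' ω := by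
        intro ω
        simp only [hfs, hMh, hg', hψ]
        rw [← Real.exp_add, ← Real.exp_add, ← Real.exp_add]
        congr 1
        rw [hΦsplit ω, dotk_sub_left]
        ring
      -- pointwise identity (I3)
      have hI3 : ∀ ω : Ω, Real.exp (ψ ω) * Real.exp (aff' ω) = Real.exp (Φ s ω) := by
        intro ω
        rw [← Real.exp_add]
        congr 1
        simp only [hψ, haff', hΦ, haff0]
        rw [hArec s hts hslt]
        have eB : ∀ i : Fin p, dotk (B s i) (F (s - (i : ℕ)) ω)
            = (if h : (i : ℕ) + 1 < p then
                dotk (B (s + 1) ⟨(i : ℕ) + 1, h⟩) (F (s - (i : ℕ)) ω) else 0)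
              + dotk (ℬ (z - ν₂) (B (s + 1) ⟨0, hp⟩ - ν₁) (C (s + 1) ⟨0, hq⟩) i)
                  (F (s - (i : ℕ)) ω)
              - dotk (ℬ (-ν₂) (-ν₁) 0 i) (F (s - (i : ℕ)) ω) := by
          intro i
          rw [hBrec s hts hslt i, dotk_sub_left, dotk_add_left, dotk_dite_left]
        have eC : ∀ j : Fin q, dotk (C s j) (L (s - (j : ℕ)) ω)
            = (if h : (j : ℕ) + 1 < q then
                dotk (C (s + 1) ⟨(j : ℕ) + 1, h⟩) (L (s - (j : ℕ)) ω) else 0)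
              + dotk (𝒞 (z - ν₂) (B (s + 1) ⟨0, hp⟩ - ν₁) (C (s + 1) ⟨0, hq⟩) j)
                  (L (s - (j : ℕ)) ω)
              - dotk (𝒞 (-ν₂) (-ν₁) 0 j) (L (s - (j : ℕ)) ω) := by
          intro j
          rw [hCrec s hts hslt j, dotk_sub_left, dotk_add_left, dotk_dite_left]
        rw [Finset.sum_congr rfl fun i _ => eB i, Finset.sum_congr rfl fun j _ => eC j]
        rw [Finset.sum_sub_distrib, Finset.sum_add_distrib,
          Finset.sum_sub_distrib, Finset.sum_add_distrib]
        ring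
      -- integrability and conditional expectation pieces
      have hg'int : Integrable g' μ := by
        rw [hg']
        exact hint s (z - ν₂) (B (s + 1) ⟨0, hp⟩ - ν₁) (C (s + 1) ⟨0, hq⟩)
      have hg'ce : μ[g'|ℱ s] =ᵐ[μ] fun ω => Real.exp (aff' ω) := by
        rw [hg', haff']
        exact haff s (z - ν₂) (B (s + 1) ⟨0, hp⟩ - ν₁) (C (s + 1) ⟨0, hq⟩)
      have hψmeas : StronglyMeasurable[ℱ s] fun ω => Real.exp (ψ ω) := by
        apply Measurable.stronglyMeasurable
        apply Real.measurable_exp.comp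
        simp only [hψ, haff0]
        refine Measurable.add (Measurable.add ?_ ?_) ?_
        · refine Measurable.sub measurable_const ?_
          refine Measurable.add (Measurable.add measurable_const ?_) ?_
          · exact Finset.measurable_sum _ fun i _ => hFm (s - (i : ℕ)) s (by omega) _
          · exact Finset.measurable_sum _ fun j _ => hLm (s - (j : ℕ)) s (by omega) _
        · refine Finset.measurable_sum _ fun i _ => ?_
          by_cases h : (i : ℕ) + 1 < p
          · simp only [dif_pos h]
            exact hFm (s - (i : ℕ)) s (by omega) _
          · simp only [dif_neg h]
            exact measurable_const
        · refine Finset.measurable_sum _ fun j _ => ?_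
          by_cases h : (j : ℕ) + 1 < q
          · simp only [dif_pos h]
            exact hLm (s - (j : ℕ)) s (by omega) _
          · simp only [dif_neg h]
            exact measurable_const
      have hψaff_int : Integrable (fun ω => Real.exp (ψ ω) * Real.exp (aff' ω)) μ :=
        (goodPhi s).integrable.congr (Filter.Eventually.of_forall fun ω => (hI3 ω).symm)
      have pull1 := pull s (fun ω => Real.exp (ψ ω)) g' (fun ω => Real.exp (aff' ω)) hψmeas
        (fun ω => (Real.exp_pos _).le) hg'int
        (fun ω => by simp only [hg']; exact (Real.exp_pos _).le) hg'ce hψaff_int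
      have hfsmeas : StronglyMeasurable[ℱ (s + 1)] fs := by
        apply Measurable.stronglyMeasurable
        simp only [hfs, hMh, haff0]
        refine Measurable.mul (Real.measurable_exp.comp ?_) (Real.measurable_exp.comp ?_)
        · refine Measurable.sub (Measurable.sub ?_ ?_) ?_
          · exact ((hFm (s + 1) (s + 1) le_rfl ν₁).neg).mono (ℱ.mono le_rfl) le_rfl
          · exact (hym (s + 1) (s + 1) le_rfl).const_mul ν₂
          · refine Measurable.add (Measurable.add measurable_const ?_) ?_
            · exact Finset.measurable_sum _ fun i _ => hFm (s - (i : ℕ)) (s + 1) (by omega) _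
            · exact Finset.measurable_sum _ fun j _ => hLm (s - (j : ℕ)) (s + 1) (by omega) _
        · exact (hym (s + 1) (s + 1) le_rfl).const_mul z
      have hfsnn : ∀ ω : Ω, 0 ≤ fs ω := by
        intro ω
        simp only [hfs, hMh]
        exact mul_nonneg (Real.exp_pos _).le (Real.exp_pos _).le
      have hfsΦint : Integrable (fun ω => fs ω * Real.exp (Φ (s + 1) ω)) μ :=
        pull1.1.congr (Filter.Eventually.of_forall fun ω => (hI2 ω).symm)
      have pull2 := pull (s + 1) fs (G (s + 1)) (fun ω => Real.exp (Φ (s + 1) ω)) hfsmeas hfsnn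
        ihInt (hGnn (s + 1)) ihCE hfsΦint
      have hGsInt : Integrable (G s) μ :=
        pull2.1.congr (Filter.Eventually.of_forall fun ω => (hI1 ω).symm)
      refine ⟨hGsInt, ?_⟩
      have hCE1 : μ[G s|ℱ (s + 1)] =ᵐ[μ] fun ω => fs ω * Real.exp (Φ (s + 1) ω) := by
        have he : G s = fun ω => fs ω * G (s + 1) ω := funext hI1
        rw [he]
        exact pull2.2
      have hCE2 : μ[G s|ℱ s] =ᵐ[μ] μ[fun ω => fs ω * Real.exp (Φ (s + 1) ω)|ℱ s] := by
        refine ((condExp_condExp_of_le (ℱ.mono (by omega : s ≤ s + 1))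
          (ℱ.le (s + 1))).symm).trans ?_
        exact condExp_congr_ae hCE1
      have hCE3 : μ[fun ω => fs ω * Real.exp (Φ (s + 1) ω)|ℱ s]
          =ᵐ[μ] fun ω => Real.exp (Φ s ω) := by
        have he : (fun ω => fs ω * Real.exp (Φ (s + 1) ω)) = fun ω => Real.exp (ψ ω) * g' ω :=
          funext hI2
        rw [he]
        exact pull1.2.trans (Filter.Eventually.of_forall fun ω => hI3 ω)
      exact hCE2.trans hCE3
  -- assembly
  have hTt : t + ((T - t).toNat : ℤ) = T := by omega
  obtain ⟨-, hfin⟩ := key (T - t).toNat t le_rfl hTt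
  have hMG : ∀ u : ℤ, M u =ᵐ[μ] Mh u := by
    intro u
    have h2 : (μ[fun ω' => Real.exp (-dotk ν₁ (F (u + 1) ω') - ν₂ * y (u + 1) ω')|ℱ u])
        =ᵐ[μ] fun ω => Real.exp (aff0 u ω) := by
      have he : (fun ω => Real.exp ((-ν₂) * y (u + 1) ω + dotk (-ν₁) (F (u + 1) ω)
          + dotk (0 : Fin k → ℝ) (L (u + 1) ω)))
          = fun ω' => Real.exp (-dotk ν₁ (F (u + 1) ω') - ν₂ * y (u + 1) ω') := by
        funext ω
        rw [dotk_neg_left, dotk_zero_left]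
        congr 1
        ring
      rw [← he, haff0]
      exact haff u (-ν₂) (-ν₁) 0
    filter_upwards [hM u, h2] with ω hω1 hω2
    rw [hω1, hω2]
    simp only [hMh]
    exact (Real.exp_sub _ _).symm
  have horig : (fun ω => (∏ s ∈ Finset.Ico t T, M s ω)
      * Real.exp (z * ∑ u ∈ Finset.Icc (t + 1) T, y u ω)) =ᵐ[μ] G t := by
    have hall : ∀ᵐ ω ∂μ, ∀ u ∈ Finset.Ico t T, M u ω = Mh u ω :=
      (Filter.eventually_all_finset _).2 fun u _ => hMG u
    filter_upwards [hall] with ω hω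
    simp only [hG]
    rw [Finset.prod_congr rfl hω]
  exact (condExp_congr_ae horig).trans
    (hfin.trans (Filter.Eventually.of_forall fun ω => by simp only [hΦ]))
end

section
/- Let δ > 0, Θ ≥ 0, θ > 0, λ, γ, r ∈ ℝ, and consider on ℝ × ℝ the product measure μ = γ̄(δ, Θ, θ) ⊗ N(0,1) with coordinates (R, ε). Set y = r + λ R + √R ε and M = exp(−ν₁ R − ν₂ y) / ∫ exp(−ν₁ R − ν₂ y) dμ for ν₁, ν₂ ∈ ℝ satisfying θ x(1−ν₂, −ν₁, 0) < 1 and θ x(−ν₂, −ν₁, 0) < 1, where x(z, b, c) = zλ + b + ((1/2) z² + γ² c − 2 c γ z)/(1 − 2c). Then the one-step no-arbitrage (risk-neutral pricing) condition ∫ M e^{y} dμ = e^{r} holds if and only if ν₂ = λ + 1/2. -/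
open MeasureTheory ProbabilityTheory Real

/-- The noncentral gamma distribution `γ̄(δ, c, θ)` with shape `δ > 0`, noncentrality `c ≥ 0`
and scale `θ > 0`: the Poisson mixture `∑ₖ (e^{−c} cᵏ / k!) • Γ(δ + k, θ)`, where `Γ(a, θ)`
is the gamma distribution with shape `a` and rate `1/θ`. -/
noncomputable def ncGamma (δ c θ : ℝ) : Measure ℝ :=
  Measure.sum fun k : ℕ =>
    ENNReal.ofReal (Real.exp (-c) * c ^ k / Nat.factorial k) • gammaMeasure (δ + k) θ⁻¹

/-- `x(z, b, c) = zλ + b + ((1/2)z² + γ²c − 2cγz)/(1 − 2c)`. -/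
noncomputable def xfun (lam γ z b c : ℝ) : ℝ :=
  z * lam + b + ((1 / 2) * z ^ 2 + γ ^ 2 * c - 2 * c * γ * z) / (1 - 2 * c)

lemma gauss_lint (t : ℝ) :
    ∫⁻ x, ENNReal.ofReal (rexp (t * x)) ∂(gaussianReal 0 1)
      = ENNReal.ofReal (rexp (t ^ 2 / 2)) := by
  rw [gaussianReal_of_var_ne_zero 0 one_ne_zero,
    lintegral_withDensity_eq_lintegral_mul _ (measurable_gaussianPDF 0 1)
      (by fun_prop)]
  have h : ∀ x, (gaussianPDF 0 1 * fun x => ENNReal.ofReal (rexp (t * x))) x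
      = ENNReal.ofReal (rexp (t ^ 2 / 2)) * gaussianPDF t 1 x := by
    intro x
    simp only [Pi.mul_apply, gaussianPDF, ← ENNReal.ofReal_mul (gaussianPDFReal_nonneg 0 1 x)]
    rw [← ENNReal.ofReal_mul (exp_nonneg _)]
    congr 1
    simp only [gaussianPDFReal, NNReal.coe_one, mul_one]
    rw [mul_assoc, ← exp_add, mul_comm (rexp (t ^ 2 / 2)), mul_assoc, ← exp_add]
    congr 1
    ring
  rw [lintegral_congr h, lintegral_const_mul _ (measurable_gaussianPDF t 1),
    lintegral_gaussianPDF_eq_one t one_ne_zero, mul_one]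

lemma gamma_lint {a r t : ℝ} (ha : 0 < a) (hr : 0 < r) (ht : t < r) :
    ∫⁻ x, ENNReal.ofReal (rexp (t * x)) ∂(gammaMeasure a r)
      = ENNReal.ofReal ((r / (r - t)) ^ a) := by
  have hrt : 0 < r - t := sub_pos.mpr ht
  rw [gammaMeasure, lintegral_withDensity_eq_lintegral_mul _
    (show Measurable (gammaPDF a r) from (measurable_gammaPDFReal a r).ennreal_ofReal) (by fun_prop)]
  have h : ∀ x, (gammaPDF a r * fun x => ENNReal.ofReal (rexp (t * x))) x
      = ENNReal.ofReal ((r / (r - t)) ^ a) * gammaPDF a (r - t) x := by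
    intro x
    rcases lt_or_ge x 0 with hx | hx
    · simp [Pi.mul_apply, gammaPDF_of_neg hx]
    · rw [Pi.mul_apply, gammaPDF_of_nonneg hx, gammaPDF_of_nonneg hx,
        ← ENNReal.ofReal_mul (by
          have := Real.Gamma_pos_of_pos ha; positivity),
        ← ENNReal.ofReal_mul (by positivity)]
      congr 1
      rw [div_rpow hr.le hrt.le]
      have h2 : (r - t) ^ a ≠ 0 := (rpow_pos_of_pos hrt a).ne'
      field_simp
      ring_nf
      rw [exp_add]
      ring
  rw [lintegral_congr h, lintegral_const_mul _
    (show Measurable (gammaPDF a (r - t)) from (measurable_gammaPDFReal a (r - t)).ennreal_ofReal)]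
  have : ∫⁻ x, gammaPDF a (r - t) x = 1 := lintegral_gammaPDF_eq_one ha hrt
  rw [this, mul_one]

lemma ncGamma_lint {δ Θ θ t : ℝ} (hδ : 0 < δ) (hΘ : 0 ≤ Θ) (hθ : 0 < θ) (ht : θ * t < 1) :
    ∫⁻ x, ENNReal.ofReal (rexp (t * x)) ∂(ncGamma δ Θ θ)
      = ENNReal.ofReal ((1 - θ * t) ^ (-δ) * rexp (Θ * (1 / (1 - θ * t) - 1))) := by
  have hs : 0 < 1 - θ * t := by linarith [ht]
  have hq : 0 < (1 - θ * t)⁻¹ := inv_pos.mpr hs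
  have htr : t < θ⁻¹ := by
    rw [inv_eq_one_div, lt_div_iff₀ hθ]; linarith [ht]
  have hqeq : θ⁻¹ / (θ⁻¹ - t) = (1 - θ * t)⁻¹ := by
    rw [div_eq_iff (by linarith [sub_pos.mpr htr] : θ⁻¹ - t ≠ 0)]
    field_simp
  have hterm : ∀ k : ℕ,
      ∫⁻ x, ENNReal.ofReal (rexp (t * x)) ∂(gammaMeasure (δ + k) θ⁻¹)
        = ENNReal.ofReal (((1 - θ * t)⁻¹) ^ (δ + (k : ℝ))) := by
    intro k
    rw [gamma_lint (by positivity) (by positivity) htr, hqeq]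
  rw [ncGamma, lintegral_sum_measure]
  simp_rw [lintegral_smul_measure, hterm]
  have hw : ∀ k : ℕ, (0:ℝ) ≤ rexp (-Θ) * Θ ^ k / Nat.factorial k := by
    intro k; positivity
  have hmul : ∀ k : ℕ,
      ENNReal.ofReal (rexp (-Θ) * Θ ^ k / Nat.factorial k)
          * ENNReal.ofReal (((1 - θ * t)⁻¹) ^ (δ + (k : ℝ)))
        = ENNReal.ofReal ((rexp (-Θ) * ((1 - θ * t)⁻¹) ^ δ)
            * ((Θ * (1 - θ * t)⁻¹) ^ k / Nat.factorial k)) := by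
    intro k
    rw [← ENNReal.ofReal_mul (hw k)]
    congr 1
    rw [rpow_add hq, rpow_natCast, mul_pow]
    ring
  simp_rw [smul_eq_mul, hmul]
  have hsum : Summable fun k : ℕ => (rexp (-Θ) * ((1 - θ * t)⁻¹) ^ δ)
      * ((Θ * (1 - θ * t)⁻¹) ^ k / Nat.factorial k) :=
    (Real.summable_pow_div_factorial _).mul_left _
  rw [← ENNReal.ofReal_tsum_of_nonneg (fun k => by positivity) hsum]
  congr 1
  rw [tsum_mul_left]
  have hexp : ∑' n : ℕ, (Θ * (1 - θ * t)⁻¹) ^ n / (Nat.factorial n : ℝ)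
      = rexp (Θ * (1 - θ * t)⁻¹) := by
    rw [Real.exp_eq_exp_ℝ, NormedSpace.exp_eq_tsum_div]
  rw [hexp]
  have hpow : ((1 - θ * t)⁻¹) ^ δ = (1 - θ * t) ^ (-δ) := by
    rw [inv_rpow hs.le, ← rpow_neg hs.le]
  rw [hpow, mul_comm (rexp (-Θ)), mul_assoc, ← exp_add]
  congr 2
  field_simp
  ring

lemma ncGamma_ae_nonneg (δ Θ θ : ℝ) : ∀ᵐ x ∂(ncGamma δ Θ θ), 0 ≤ x := by
  rw [ae_iff]
  have hset : {x : ℝ | ¬ 0 ≤ x} = Set.Iio 0 := by ext x; simp [not_le]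
  rw [hset, ncGamma, Measure.sum_apply _ measurableSet_Iio]
  have hg : ∀ k : ℕ, gammaMeasure (δ + k) θ⁻¹ (Set.Iio 0) = 0 := by
    intro k
    rw [gammaMeasure, withDensity_apply _ measurableSet_Iio]
    exact lintegral_gammaPDF_of_nonpos le_rfl
  simp [hg]

lemma meas_aux (K b c : ℝ) :
    Measurable fun pt : ℝ × ℝ => rexp (K + b * pt.1 + c * (Real.sqrt pt.1 * pt.2)) := by
  apply Real.measurable_exp.comp
  exact ((measurable_const.add (measurable_fst.const_mul b)).add
    (((Real.continuous_sqrt.measurable.comp measurable_fst).mul measurable_snd).const_mul c))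

lemma integral_exp_eval {δ Θ θ : ℝ} (hδ : 0 < δ) (hΘ : 0 ≤ Θ) (hθ : 0 < θ)
    (K b c : ℝ) (h : θ * (b + c ^ 2 / 2) < 1) :
    ∫ pt : ℝ × ℝ, rexp (K + b * pt.1 + c * (Real.sqrt pt.1 * pt.2))
        ∂((ncGamma δ Θ θ).prod (gaussianReal 0 1))
      = rexp K * ((1 - θ * (b + c ^ 2 / 2)) ^ (-δ)
          * rexp (Θ * (1 / (1 - θ * (b + c ^ 2 / 2)) - 1))) := by
  have hs : 0 < 1 - θ * (b + c ^ 2 / 2) := by linarith [h]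
  rw [integral_eq_lintegral_of_nonneg_ae (ae_of_all _ fun pt => exp_nonneg _)
    (meas_aux K b c).aestronglyMeasurable]
  have hsplit : ∀ pt : ℝ × ℝ,
      ENNReal.ofReal (rexp (K + b * pt.1 + c * (Real.sqrt pt.1 * pt.2)))
        = ENNReal.ofReal (rexp K)
            * ENNReal.ofReal (rexp (b * pt.1 + (c * Real.sqrt pt.1) * pt.2)) := by
    intro pt
    rw [← ENNReal.ofReal_mul (exp_nonneg _), ← exp_add]
    congr 1
    ring
  simp_rw [hsplit]
  rw [lintegral_const_mul _ (by
    apply Measurable.ennreal_ofReal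
    apply Real.measurable_exp.comp
    exact (measurable_fst.const_mul b).add
      (((Real.continuous_sqrt.measurable.comp measurable_fst).const_mul c).mul measurable_snd))]
  have hprod : ∫⁻ pt : ℝ × ℝ, ENNReal.ofReal (rexp (b * pt.1 + (c * Real.sqrt pt.1) * pt.2))
      ∂((ncGamma δ Θ θ).prod (gaussianReal 0 1))
      = ENNReal.ofReal ((1 - θ * (b + c ^ 2 / 2)) ^ (-δ)
          * rexp (Θ * (1 / (1 - θ * (b + c ^ 2 / 2)) - 1))) := by
    rw [lintegral_prod _ (by
      apply Measurable.aemeasurable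
      apply Measurable.ennreal_ofReal
      apply Real.measurable_exp.comp
      exact (measurable_fst.const_mul b).add
        (((Real.continuous_sqrt.measurable.comp measurable_fst).const_mul c).mul
          measurable_snd))]
    have hinner : ∀ x : ℝ,
        ∫⁻ y, ENNReal.ofReal (rexp (b * x + (c * Real.sqrt x) * y)) ∂(gaussianReal 0 1)
          = ENNReal.ofReal (rexp (b * x)) * ENNReal.ofReal (rexp ((c * Real.sqrt x) ^ 2 / 2)) := by
      intro x
      have : ∀ y : ℝ, ENNReal.ofReal (rexp (b * x + (c * Real.sqrt x) * y))
          = ENNReal.ofReal (rexp (b * x)) * ENNReal.ofReal (rexp ((c * Real.sqrt x) * y)) := by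
        intro y
        rw [← ENNReal.ofReal_mul (exp_nonneg _), ← exp_add]
      simp_rw [this]
      rw [lintegral_const_mul _ (by
        apply Measurable.ennreal_ofReal
        exact Real.measurable_exp.comp (measurable_id.const_mul _)), gauss_lint]
    simp_rw [hinner]
    have hae : ∀ᵐ x ∂(ncGamma δ Θ θ),
        ENNReal.ofReal (rexp (b * x)) * ENNReal.ofReal (rexp ((c * Real.sqrt x) ^ 2 / 2))
          = ENNReal.ofReal (rexp ((b + c ^ 2 / 2) * x)) := by
      filter_upwards [ncGamma_ae_nonneg δ Θ θ] with x hx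
      rw [← ENNReal.ofReal_mul (exp_nonneg _), ← exp_add]
      congr 2
      rw [mul_pow, Real.sq_sqrt hx]
      ring
    rw [lintegral_congr_ae hae, ncGamma_lint hδ hΘ hθ h]
  rw [hprod, ← ENNReal.ofReal_mul (exp_nonneg _), ENNReal.toReal_ofReal (by positivity)]

lemma ncg_inj {δ Θ : ℝ} (hδ : 0 < δ) (hΘ : 0 ≤ Θ) {s1 s2 : ℝ} (h1 : 0 < s1) (h2 : 0 < s2)
    (h : s1 ^ (-δ) * rexp (Θ * (1 / s1 - 1)) = s2 ^ (-δ) * rexp (Θ * (1 / s2 - 1))) :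
    s1 = s2 := by
  have key : ∀ a b : ℝ, 0 < a → 0 < b → a < b →
      b ^ (-δ) * rexp (Θ * (1 / b - 1)) < a ^ (-δ) * rexp (Θ * (1 / a - 1)) := by
    intro a b ha hb hab
    have hr : b ^ (-δ) < a ^ (-δ) := rpow_lt_rpow_of_neg ha hab (by linarith)
    have hinv : 1 / b ≤ 1 / a := one_div_le_one_div_of_le ha hab.le
    have he : rexp (Θ * (1 / b - 1)) ≤ rexp (Θ * (1 / a - 1)) := by
      apply exp_le_exp.mpr
      nlinarith
    exact mul_lt_mul hr he (exp_pos _) (rpow_pos_of_pos ha _).le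
  rcases lt_trichotomy s1 s2 with hlt | heq | hgt
  · have := key s1 s2 h1 h2 hlt; linarith
  · exact heq
  · have := key s2 s1 h2 h1 hgt; linarith

/-- One-step no-arbitrage (risk-neutral pricing) condition for the LHARG
model: on `μ = γ̄(δ, Θ, θ) ⊗ N(0,1)` with coordinates `(R, ε)`, `y = r + λR + √R ε` and
SDF `M = exp(−ν₁R − ν₂y)/∫ exp(−ν₁R − ν₂y) dμ`, one has `∫ M e^y dμ = e^r` iff
`ν₂ = λ + 1/2`. -/
theorem lharg_one_step_no_arbitrage_iff (δ Θ θ lam γ r ν₁ ν₂ : ℝ)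
    (hδ : 0 < δ) (hΘ : 0 ≤ Θ) (hθ : 0 < θ)
    (hx1 : θ * xfun lam γ (1 - ν₂) (-ν₁) 0 < 1)
    (hx0 : θ * xfun lam γ (-ν₂) (-ν₁) 0 < 1) :
    let μ : Measure (ℝ × ℝ) := (ncGamma δ Θ θ).prod (gaussianReal 0 1)
    let y : ℝ × ℝ → ℝ := fun pt => r + lam * pt.1 + Real.sqrt pt.1 * pt.2
    let M : ℝ × ℝ → ℝ := fun pt =>
      Real.exp (-ν₁ * pt.1 - ν₂ * y pt) / ∫ pt', Real.exp (-ν₁ * pt'.1 - ν₂ * y pt') ∂μ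
    (∫ pt, M pt * Real.exp (y pt) ∂μ = Real.exp r) ↔ ν₂ = lam + 1 / 2 := by
  intro μ y M
  set T₀ : ℝ := (-ν₁ - ν₂ * lam) + (-ν₂) ^ 2 / 2 with hT₀
  set T₁ : ℝ := ((1 - ν₂) * lam - ν₁) + (1 - ν₂) ^ 2 / 2 with hT₁
  have hxT0 : xfun lam γ (-ν₂) (-ν₁) 0 = T₀ := by
    rw [xfun, hT₀]; ring
  have hxT1 : xfun lam γ (1 - ν₂) (-ν₁) 0 = T₁ := by
    rw [xfun, hT₁]; ring
  have ht0 : θ * T₀ < 1 := hxT0 ▸ hx0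
  have ht1 : θ * T₁ < 1 := hxT1 ▸ hx1
  have hs0 : 0 < 1 - θ * T₀ := by linarith
  have hs1 : 0 < 1 - θ * T₁ := by linarith
  set G₀ : ℝ := (1 - θ * T₀) ^ (-δ) * rexp (Θ * (1 / (1 - θ * T₀) - 1)) with hG₀
  set G₁ : ℝ := (1 - θ * T₁) ^ (-δ) * rexp (Θ * (1 / (1 - θ * T₁) - 1)) with hG₁
  have hG₀pos : 0 < G₀ := by rw [hG₀]; positivity
  have hG₁pos : 0 < G₁ := by rw [hG₁]; positivity
  -- the denominator
  have hD : (∫ pt', rexp (-ν₁ * pt'.1 - ν₂ * y pt') ∂μ) = rexp (-ν₂ * r) * G₀ := by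
    have hpt : ∀ pt : ℝ × ℝ, -ν₁ * pt.1 - ν₂ * y pt
        = (-ν₂ * r) + (-ν₁ - ν₂ * lam) * pt.1 + (-ν₂) * (Real.sqrt pt.1 * pt.2) := by
      intro pt; simp only [y]; ring
    simp_rw [hpt]
    exact integral_exp_eval hδ hΘ hθ _ _ _ (by rw [← hT₀] at *; exact ht0)
  -- the numerator
  have hN : (∫ pt, rexp ((1 - ν₂) * r + ((1 - ν₂) * lam - ν₁) * pt.1
      + (1 - ν₂) * (Real.sqrt pt.1 * pt.2)) ∂μ) = rexp ((1 - ν₂) * r) * G₁ :=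
    integral_exp_eval hδ hΘ hθ _ _ _ ht1
  have hLHS : ∫ pt, M pt * rexp (y pt) ∂μ
      = (rexp ((1 - ν₂) * r) * G₁) / (rexp (-ν₂ * r) * G₀) := by
    have hpt : ∀ pt : ℝ × ℝ, M pt * rexp (y pt)
        = rexp ((1 - ν₂) * r + ((1 - ν₂) * lam - ν₁) * pt.1
            + (1 - ν₂) * (Real.sqrt pt.1 * pt.2)) / (rexp (-ν₂ * r) * G₀) := by
      intro pt
      simp only [M, hD, div_mul_eq_mul_div, ← exp_add]
      congr 2
      simp only [y]; ring
    simp_rw [hpt]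
    rw [integral_div, hN]
  rw [hLHS]
  have hDne : rexp (-ν₂ * r) * G₀ ≠ 0 := by positivity
  rw [div_eq_iff hDne]
  have hrhs : rexp r * (rexp (-ν₂ * r) * G₀) = rexp ((1 - ν₂) * r) * G₀ := by
    rw [← mul_assoc, ← exp_add]
    congr 2
    ring
  rw [hrhs]
  constructor
  · intro h
    have hGeq : G₁ = G₀ := mul_left_cancel₀ (exp_ne_zero _) h
    have hseq : 1 - θ * T₁ = 1 - θ * T₀ := ncg_inj hδ hΘ hs1 hs0 (by rw [← hG₁, ← hG₀, hGeq])
    have hTeq : T₁ = T₀ := by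
      have : θ * T₁ = θ * T₀ := by linarith
      exact mul_left_cancel₀ hθ.ne' this
    have hdiff : T₁ - T₀ = lam + 1 / 2 - ν₂ := by rw [hT₀, hT₁]; ring
    have h0 : (0:ℝ) = lam + 1 / 2 - ν₂ := by rw [← hdiff, hTeq, sub_self]
    linarith
  · intro h
    have hTeq : T₁ = T₀ := by rw [hT₀, hT₁, h]; ring
    rw [hG₁, hG₀, hTeq]
end
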